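/- For any k-edge-connected multigraph G with k ∈ {2,3} and any destination vertex d, any circular-arborescence routing (i.e., one built from any set of k pairwise arc-disjoint d-rooted spanning arborescences with any circular order and any per-source choice of initial arborescence) is (k−1)-resilient; moreover, during the delivery of any packet the number of switches between arborescences is at most 4. -/

import Mathlib

open scoped Classical

namespace Srr

/-- A multigraph on vertex type `V` with edge-name type `E`: every edge name is
assigned its (unordered) pair of endpoints; parallel edges are allowed. -/
structure Multigraph (V E : Type) where
  ends : E → Sym2 V

namespace Multigraph

variable {V E : Type}

/-- Walks in a multigraph. -/
inductive Walk (G : Multigraph V E) : V → V → Type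
  | nil (v : V) : Walk G v v
  | cons {u v w : V} (e : E) (h : G.ends e = s(u, v)) (p : Walk G v w) : Walk G u w

namespace Walk

/-- The edges of a walk, in order. -/
def edges {G : Multigraph V E} : ∀ {u v : V}, G.Walk u v → List E
  | _, _, nil _ => []
  | _, _, cons e _ p => e :: edges p

/-- The vertices visited by a walk, in order. -/
def support {G : Multigraph V E} : ∀ {u v : V}, G.Walk u v → List V
  | _, _, nil v => [v]
  | u, _, cons _ _ p => u :: support p

/-- A walk is a path if it visits no vertex twice. -/
def IsPath {G : Multigraph V E} {u v : V} (p : G.Walk u v) : Prop :=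
  p.support.Nodup

end Walk

/-- `G` is `k`-edge-connected: between every pair of distinct vertices there
exist `k` pairwise edge-disjoint paths. -/
def EdgeConnected (G : Multigraph V E) (k : ℕ) : Prop :=
  ∀ u v : V, u ≠ v → ∃ P : Fin k → G.Walk u v,
    (∀ i, (P i).IsPath) ∧
    ∀ i j : Fin k, i ≠ j → ∀ e : E, e ∈ (P i).edges → e ∉ (P j).edges

/-- `s` is still connected to `d` after the edges of `F` have failed. -/
def ConnAvoiding (G : Multigraph V E) (F : Finset E) (s d : V) : Prop :=
  ∃ p : G.Walk s d, ∀ e ∈ p.edges, e ∉ F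

/-- The active (non-failed) edges incident to `v`, given the failed set `F`. -/
noncomputable def activeAt [Fintype E] (G : Multigraph V E) (F : Finset E) (v : V) :
    Finset E :=
  Finset.univ.filter (fun e => v ∈ G.ends e ∧ e ∉ F)

end Multigraph

/-- A static deterministic destination-based set of routing functions: for each
vertex, a map from (incoming edge, `none` if the packet originates there;
set of active incident edges) to a chosen outgoing edge. -/
def Routing (V E : Type) : Type := V → Option E → Finset E → E

/-- Header-rewriting routing functions with a 3-bit (8-valued) header. -/
def HRouting (V E : Type) : Type := V → Option E → Finset E → Fin 8 → E × Fin 8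

/-- Duplication routing functions: the output is the set of edges along which
copies of the packet are sent. -/
def DRouting (V E : Type) : Type := V → Option E → Finset E → Finset E

/-- `σ` (the "next" map) describes a circular order on `Fin k`: iterating `σ`
from any index visits every index. -/
def IsCircularOrder {k : ℕ} (σ : Fin k → Fin k) : Prop :=
  ∀ i j : Fin k, ∃ m : ℕ, σ^[m] i = j

/-- Whether the second component (the arborescence in use) changes between
times `m` and `m+1` of a run. -/
noncomputable def switchAt {α β : Type} (run : ℕ → Option (α × β)) (m : ℕ) : Bool :=
  match run m, run (m + 1) with
  | some p, some q => decide (p.2 ≠ q.2)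
  | _, _ => false

/-- The number of switches of the second component during the first `n` steps
of a run. -/
noncomputable def switchCount {α β : Type} (run : ℕ → Option (α × β)) (n : ℕ) : ℕ :=
  ((List.range n).filter (fun m => switchAt run m)).length

namespace Multigraph

variable {V E : Type} [Fintype V] [Fintype E]

/-- One forwarding step of a packet under routing `f` and failed edge set `F`;
a state is (current vertex, incoming edge or `none`). The step is only
possible when the chosen edge is incident to the current vertex and has not
failed. -/
def RStep (G : Multigraph V E) (f : Routing V E) (F : Finset E)
    (p q : V × Option E) : Prop :=
  ∃ w : V,
    f p.1 p.2 (G.activeAt F p.1) ∉ F ∧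
    G.ends (f p.1 p.2 (G.activeAt F p.1)) = s(p.1, w) ∧
    q = (w, some (f p.1 p.2 (G.activeAt F p.1)))

/-- Under failed edges `F`, a packet originated at `s` reaches `d` in finitely
many steps. -/
def Delivers (G : Multigraph V E) (f : Routing V E) (F : Finset E) (d s : V) : Prop :=
  ∃ i : Option E, Relation.ReflTransGen (G.RStep f F) (s, none) (d, i)

/-- `f` is a `k`-resilient routing towards destination `d`. -/
def Resilient (G : Multigraph V E) (f : Routing V E) (d : V) (k : ℕ) : Prop :=
  ∀ F : Finset E, F.card ≤ k → ∀ s : V, G.ConnAvoiding F s d → G.Delivers f F d s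

/-- A `d`-rooted spanning arborescence of the directed copy of `G`: every
vertex `v ≠ d` has exactly one outgoing arc, which goes along the edge
`edge v` towards `parent v`; `d` has no outgoing arc; following `parent`
from any vertex reaches `d` (hence every vertex has a unique directed path
to `d` in the arborescence). -/
structure Arborescence (G : Multigraph V E) (d : V) where
  parent : V → V
  edge : V → E
  parent_root : parent d = d
  ends_eq : ∀ v : V, v ≠ d → G.ends (edge v) = s(v, parent v)
  reaches_root : ∀ v : V, ∃ n : ℕ, parent^[n] v = d

namespace Arborescence

/-- Two arborescences are arc-disjoint: no directed arc (identified by its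
tail vertex together with the underlying edge) lies in both. -/
def ArcDisjoint {G : Multigraph V E} {d : V} (T₁ T₂ : G.Arborescence d) : Prop :=
  ∀ v : V, v ≠ d → T₁.edge v ≠ T₂.edge v

/-- `T₁` and `T₂` share an edge `{v,w}` of `G` if the arc `(v,w)` is in `T₁`
and the reversed arc `(w,v)` (of the same underlying edge) is in `T₂`. -/
def SharesEdge {G : Multigraph V E} {d : V} (T₁ T₂ : G.Arborescence d) : Prop :=
  ∃ v w : V, v ≠ d ∧ w ≠ d ∧
    T₁.parent v = w ∧ T₂.parent w = v ∧ T₁.edge v = T₂.edge w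

/-- The unique directed path in `T` from `u` to `d` contains no failed edge. -/
def GoodFrom {G : Multigraph V E} {d : V} (T : G.Arborescence d)
    (F : Finset E) (u : V) : Prop :=
  ∀ n : ℕ, T.parent^[n] u ≠ d → T.edge (T.parent^[n] u) ∉ F

end Arborescence

/-- The next arborescence used at vertex `v` when the current one is `i`: the
first arborescence in the circular order (starting with `i` itself) whose
outgoing edge at `v` has not failed, if any. -/
noncomputable def nextIdx (G : Multigraph V E) {k : ℕ} {d : V}
    (T : Fin k → G.Arborescence d) (σ : Fin k → Fin k) (F : Finset E)
    (v : V) (i : Fin k) : Option (Fin k) :=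
  ((List.range k).map (fun m => σ^[m] i)).find? (fun j => decide ((T j).edge v ∉ F))

/-- One step of circular-arborescence routing; a state is
(current vertex, current arborescence). -/
noncomputable def caStep (G : Multigraph V E) {k : ℕ} {d : V}
    (T : Fin k → G.Arborescence d) (σ : Fin k → Fin k) (F : Finset E)
    (p : V × Fin k) : Option (V × Fin k) :=
  if p.1 = d then none
  else (G.nextIdx T σ F p.1 p.2).map (fun j => ((T j).parent p.1, j))

/-- The trajectory of a packet under circular-arborescence routing, starting
at `s` on arborescence `i₀`. -/
noncomputable def caRun (G : Multigraph V E) {k : ℕ} {d : V}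
    (T : Fin k → G.Arborescence d) (σ : Fin k → Fin k) (F : Finset E)
    (s : V) (i₀ : Fin k) : ℕ → Option (V × Fin k)
  | 0 => some (s, i₀)
  | n + 1 => (G.caRun T σ F s i₀ n).bind (G.caStep T σ F)

/-- One step of the two-phase routing `R` built from `m+1` arborescences:
in state `(v, none)` the packet is routed canonically along the last
arborescence `T (Fin.last m)`; when it hits a failed edge `{x,y}` there, it
switches to the circular-arborescence routing on the first `m` arborescences,
starting from the one containing the reversed arc `(y,x)`; states `(v, some i)`
perform this circular routing. -/
noncomputable def rStep2 (G : Multigraph V E) {m : ℕ} {d : V}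
    (T : Fin (m + 1) → G.Arborescence d) (σ : Fin m → Fin m) (F : Finset E)
    (p : V × Option (Fin m)) : Option (V × Option (Fin m)) :=
  if p.1 = d then none
  else
    match p.2 with
    | none =>
        if (T (Fin.last m)).edge p.1 ∈ F then
          ((List.finRange m).find? (fun j =>
              decide ((T j.castSucc).edge ((T (Fin.last m)).parent p.1) =
                  (T (Fin.last m)).edge p.1 ∧
                (T j.castSucc).parent ((T (Fin.last m)).parent p.1) = p.1))).map
            (fun j => (p.1, some j))
        else some ((T (Fin.last m)).parent p.1, none)
    | some i =>
        (G.nextIdx (fun j => T j.castSucc) σ F p.1 i).map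
          (fun j => ((T j.castSucc).parent p.1, some j))

/-- The trajectory of a packet under the two-phase routing `R`. -/
noncomputable def rRun2 (G : Multigraph V E) {m : ℕ} {d : V}
    (T : Fin (m + 1) → G.Arborescence d) (σ : Fin m → Fin m) (F : Finset E)
    (s : V) : ℕ → Option (V × Option (Fin m))
  | 0 => some (s, none)
  | n + 1 => (G.rRun2 T σ F s n).bind (G.rStep2 T σ F)

/-- `π` is a circular ordering of the edges incident to `v`. -/
def IsCircAt (G : Multigraph V E) (v : V) (π : E → E) : Prop :=
  (∀ e : E, v ∈ G.ends e → v ∈ G.ends (π e)) ∧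
  (∀ e : E, ¬ v ∈ G.ends e → π e = e) ∧
  (∀ e e' : E, v ∈ G.ends e → v ∈ G.ends e' → ∃ m : ℕ, π^[m] e = e')

/-- The first non-failed edge strictly after `e` in the circular order `π`
among the active edges `A`. -/
noncomputable def nextCirc (π : E → E) (e : E) (A : Finset E) : Option E :=
  ((List.range (Fintype.card E)).map (fun m => π^[m + 1] e)).find?
    (fun e' => decide (e' ∈ A))

/-- A routing is vertex-circular: every vertex has a circular ordering of its
incident edges, and a packet received along `e` is forwarded through the next
non-failed edge after `e` in this circular order. -/
def IsVertexCircular (G : Multigraph V E) (f : Routing V E) : Prop :=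
  ∀ v : V, ∃ π : E → E, G.IsCircAt v π ∧
    ∀ e : E, v ∈ G.ends e → ∀ A : Finset E, ∀ r : E,
      nextCirc π e A = some r → f v (some e) A = r

/-- A routing is vertex-connectivity-resilient: every packet originated at a
vertex having `k` pairwise edge-disjoint paths to `d` reaches `d` whenever
fewer than `k` edges fail. -/
def VertexConnResilient (G : Multigraph V E) (d : V) (f : Routing V E) : Prop :=
  ∀ v : V, ∀ k : ℕ,
    (∃ P : Fin k → G.Walk v d, (∀ i, (P i).IsPath) ∧
      ∀ i j : Fin k, i ≠ j → ∀ e : E, e ∈ (P i).edges → e ∉ (P j).edges) →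
    ∀ F : Finset E, F.card < k → G.Delivers f F d v

/-- One step of header-rewriting routing; a state is
(current vertex, incoming edge, current 3-bit header). -/
def HStep (G : Multigraph V E) (f : HRouting V E) (F : Finset E)
    (p q : V × Option E × Fin 8) : Prop :=
  ∃ w : V,
    (f p.1 p.2.1 (G.activeAt F p.1) p.2.2).1 ∉ F ∧
    G.ends (f p.1 p.2.1 (G.activeAt F p.1) p.2.2).1 = s(p.1, w) ∧
    q = (w, some (f p.1 p.2.1 (G.activeAt F p.1) p.2.2).1,
         (f p.1 p.2.1 (G.activeAt F p.1) p.2.2).2)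

/-- The endpoint of `e` other than `v` (an arbitrary vertex if `e` is not
incident to `v`; `v` itself if `e` is a loop at `v`). -/
noncomputable def otherEnd (G : Multigraph V E) (v : V) (e : E) : V :=
  if h : ∃ w : V, G.ends e = s(v, w) then h.choose else v

/-- The copies produced from packet state `p` in one step of duplication
routing: one copy along each chosen non-failed incident edge; no copies once
the packet is at `d`. -/
noncomputable def dchildren (G : Multigraph V E) (f : DRouting V E) (F : Finset E)
    (d : V) (p : V × Option E) : Multiset (V × Option E) :=
  if p.1 = d then 0
  else ((f p.1 p.2 (G.activeAt F p.1) ∩ G.activeAt F p.1).val.map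
      (fun e => (G.otherEnd p.1 e, some e)))

/-- The multiset of packet-copy states after `n` steps of duplication routing
of a packet originated at `s`. -/
noncomputable def dlevel (G : Multigraph V E) (f : DRouting V E) (F : Finset E)
    (d : V) (s : V) : ℕ → Multiset (V × Option E)
  | 0 => {(s, none)}
  | n + 1 => (G.dlevel f F d s n).bind (G.dchildren f F d)

/-- The total number of new copies of the packet created during the first `N`
steps of duplication routing. -/
noncomputable def dcreated (G : Multigraph V E) (f : DRouting V E) (F : Finset E)
    (d : V) (s : V) (N : ℕ) : ℕ :=
  ∑ n ∈ Finset.range N,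
    ((G.dlevel f F d s n).map (fun p => (G.dchildren f F d p).card - 1)).sum

/-- Two vertices are joined by a walk in the multigraph. -/
def Reach (G : Multigraph V E) : V → V → Prop :=
  Relation.ReflTransGen (fun u v => ∃ e : E, G.ends e = s(u, v))

/-- The connected component of `v`. -/
noncomputable def compOf (G : Multigraph V E) (v : V) : Finset V :=
  Finset.univ.filter (fun w => G.Reach v w)

/-- The edges with all endpoints inside `S`. -/
noncomputable def edgesIn (G : Multigraph V E) (S : Finset V) : Finset E :=
  Finset.univ.filter (fun e => ∀ x ∈ G.ends e, x ∈ S)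

/-- A set of vertices forms a tree component: it is connected, carries no
self-loop, and the number of its edges is its number of vertices minus one. -/
def IsTreeComp (G : Multigraph V E) (S : Finset V) : Prop :=
  (∀ u ∈ S, ∀ w ∈ S, G.Reach u w) ∧
  (∀ e ∈ G.edgesIn S, ¬ (G.ends e).IsDiag) ∧
  (G.edgesIn S).card = S.card - 1

end Multigraph

/-- The multigraph associated with a simple graph: the edge names are the
edges of the simple graph. -/
def toMG {W : Type} (G : SimpleGraph W) : Multigraph W G.edgeSet :=
  ⟨fun e => (e : Sym2 W)⟩

/-- A simple graph is planar: it has an embedding in the plane. Vertices are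
mapped to distinct points, every edge to a simple continuous arc between the
images of its endpoints, arcs pass through no other vertex, and two distinct
arcs may only meet at images of vertices (hence only at shared endpoints). -/
def IsPlanar {W : Type} (G : SimpleGraph W) : Prop :=
  ∃ (p : W → ℝ × ℝ) (arc : W → W → Set (ℝ × ℝ)),
    Function.Injective p ∧
    (∀ u v : W, arc u v = arc v u) ∧
    (∀ u v : W, G.Adj u v → ∃ γ : ℝ → ℝ × ℝ,
      ContinuousOn γ (Set.Icc 0 1) ∧ Set.InjOn γ (Set.Icc 0 1) ∧
      γ 0 = p u ∧ γ 1 = p v ∧ arc u v = γ '' Set.Icc 0 1) ∧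
    (∀ u v w : W, G.Adj u v → p w ∈ arc u v → w = u ∨ w = v) ∧
    (∀ u v x y : W, G.Adj u v → G.Adj x y → s(u, v) ≠ s(x, y) →
      arc u v ∩ arc x y ⊆ Set.range p)

end Srr

namespace Srr


set_option linter.unusedSectionVars false

section CircAux

open Multigraph

variable {V E : Type} [Fintype V] [Fintype E] {G : Multigraph V E} {d : V} {k : ℕ}

lemma arb_no_cycle (T : G.Arborescence d) {v : V} (hv : v ≠ d) {m : ℕ} (hm : 1 ≤ m)
    (h : T.parent^[m] v = v) : False := by
  obtain ⟨n, hn⟩ := T.reaches_root v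
  have h1 : T.parent^[m * n] v = v := by
    rw [Function.iterate_mul]; exact Function.iterate_fixed h n
  have h2 : T.parent^[m * n - n + n] v = d := by
    rw [Function.iterate_add_apply, hn]
    exact Function.iterate_fixed T.parent_root _
  rw [Nat.sub_add_cancel (Nat.le_mul_of_pos_left n hm)] at h2
  exact hv (h1.symm.trans h2)

lemma no_two_cycle (T : G.Arborescence d) {v w : V} (hv : v ≠ d)
    (h1 : T.parent v = w) (h2 : T.parent w = v) : False := by
  refine arb_no_cycle T hv (m := 2) (by norm_num) ?_
  have : (2 : ℕ) = 1 + 1 := rfl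
  rw [this, Function.iterate_add_apply]
  simp [h1, h2]

lemma circ_next_ne {k : ℕ} (σ : Fin k → Fin k) (hσ : IsCircularOrder σ) (hk : 2 ≤ k)
    (i : Fin k) : σ i ≠ i := by
  intro h
  have hcard : 1 < Fintype.card (Fin k) := by rw [Fintype.card_fin]; omega
  obtain ⟨j, hj⟩ := Fintype.exists_ne_of_one_lt_card hcard i
  obtain ⟨m, hm⟩ := hσ i j
  rw [Function.iterate_fixed h] at hm
  exact hj hm.symm

lemma circ_next2_ne (σ : Fin 3 → Fin 3) (hσ : IsCircularOrder σ) (i : Fin 3) :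
    σ (σ i) ≠ i := by
  intro h
  have horb : ∀ m, σ^[m] i = i ∨ σ^[m] i = σ i := by
    intro m
    induction m with
    | zero => exact Or.inl rfl
    | succ m ih =>
      rw [Function.iterate_succ_apply']
      rcases ih with h1 | h1 <;> rw [h1]
      · exact Or.inr rfl
      · exact Or.inl h
  have hex : ∀ a b : Fin 3, ∃ c : Fin 3, c ≠ a ∧ c ≠ b := by decide
  obtain ⟨c, hc1, hc2⟩ := hex i (σ i)
  obtain ⟨m, hm⟩ := hσ i c
  rcases horb m with h1 | h1 <;> rw [hm] at h1
  · exact hc1 h1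
  · exact hc2 h1

lemma nextIdx_good (G : Multigraph V E) (T : Fin k → G.Arborescence d)
    (σ : Fin k → Fin k) (F : Finset E) (hk : 0 < k) {v : V} {i : Fin k}
    (h : (T i).edge v ∉ F) : G.nextIdx T σ F v i = some i := by
  obtain ⟨k', rfl⟩ : ∃ k', k = k' + 1 := ⟨k - 1, (Nat.succ_pred_eq_of_pos hk).symm⟩
  unfold Multigraph.nextIdx
  rw [List.range_succ_eq_map, List.map_cons, List.find?_cons_of_pos]
  · simp
  · exact decide_eq_true h


lemma nextIdx_two (G : Multigraph V E) {d : V} (T : Fin 2 → G.Arborescence d)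
    (σ : Fin 2 → Fin 2) (F : Finset E) (v : V) (i : Fin 2) :
    G.nextIdx T σ F v i = [i, σ i].find? (fun j => decide ((T j).edge v ∉ F)) := by
  unfold Multigraph.nextIdx
  have h2 : List.range 2 = [0, 1] := rfl
  rw [h2]
  rfl

lemma nextIdx_three (G : Multigraph V E) {d : V} (T : Fin 3 → G.Arborescence d)
    (σ : Fin 3 → Fin 3) (F : Finset E) (v : V) (i : Fin 3) :
    G.nextIdx T σ F v i =
      [i, σ i, σ (σ i)].find? (fun j => decide ((T j).edge v ∉ F)) := by
  unfold Multigraph.nextIdx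
  have h3 : List.range 3 = [0, 1, 2] := rfl
  rw [h3]
  have : σ^[2] i = σ (σ i) := rfl
  rfl

lemma two_mem_le {α : Type} {F : Finset α} {a b : α} (hab : a ≠ b)
    (ha : a ∈ F) (hb : b ∈ F) : 2 ≤ F.card := by
  have hsub : ({a, b} : Finset α) ⊆ F := by
    intro x hx; simp at hx; rcases hx with rfl | rfl <;> assumption
  have := Finset.card_le_card hsub
  rwa [Finset.card_insert_of_notMem (by simpa using hab), Finset.card_singleton] at this

lemma three_mem_le {α : Type} {F : Finset α} {a b c : α} (hab : a ≠ b) (hac : a ≠ c)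
    (hbc : b ≠ c) (ha : a ∈ F) (hb : b ∈ F) (hc : c ∈ F) : 3 ≤ F.card := by
  have hsub : ({a, b, c} : Finset α) ⊆ F := by
    intro x hx; simp at hx; rcases hx with rfl | rfl | rfl <;> assumption
  have := Finset.card_le_card hsub
  rwa [Finset.card_insert_of_notMem (by simp [hab, hac]),
    Finset.card_insert_of_notMem (by simpa using hbc), Finset.card_singleton] at this

lemma nextIdx_bad2 (G : Multigraph V E) {d : V} (T : Fin 2 → G.Arborescence d)
    (σ : Fin 2 → Fin 2) (F : Finset E) (hσ : IsCircularOrder σ)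
    (hdisj : ∀ i j : Fin 2, i ≠ j → (T i).ArcDisjoint (T j))
    (hF : F.card ≤ 1) {v : V} {i : Fin 2} (hv : v ≠ d) (h : (T i).edge v ∈ F) :
    G.nextIdx T σ F v i = some (σ i) ∧ (T (σ i)).edge v ∉ F ∧ σ i ≠ i := by
  have hne := circ_next_ne σ hσ (le_refl 2) i
  have hgood : (T (σ i)).edge v ∉ F := by
    intro hbad
    have hd := hdisj (σ i) i hne v hv
    have := two_mem_le hd hbad h
    omega
  refine ⟨?_, hgood, hne⟩
  rw [nextIdx_two]
  rw [List.find?_cons_of_neg (by simp [h]), List.find?_cons_of_pos (by simp [hgood])]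

lemma nextIdx_bad3 (G : Multigraph V E) {d : V} (T : Fin 3 → G.Arborescence d)
    (σ : Fin 3 → Fin 3) (F : Finset E) (hσ : IsCircularOrder σ)
    (hdisj : ∀ i j : Fin 3, i ≠ j → (T i).ArcDisjoint (T j))
    (hF : F.card ≤ 2) {v : V} {i : Fin 3} (hv : v ≠ d) (h : (T i).edge v ∈ F) :
    ∃ j, G.nextIdx T σ F v i = some j ∧ (T j).edge v ∉ F ∧ j ≠ i ∧
      (j = σ i ∨ (T (σ i)).edge v ∈ F) := by
  have hne1 : σ i ≠ i := circ_next_ne σ hσ (by norm_num) i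
  have hne2 : σ (σ i) ≠ i := circ_next2_ne σ hσ i
  have hne3 : σ (σ i) ≠ σ i := circ_next_ne σ hσ (by norm_num) (σ i)
  by_cases h1 : (T (σ i)).edge v ∈ F
  · by_cases h2 : (T (σ (σ i))).edge v ∈ F
    · exfalso
      have d1 := hdisj i (σ i) hne1.symm v hv
      have d2 := hdisj i (σ (σ i)) hne2.symm v hv
      have d3 := hdisj (σ i) (σ (σ i)) hne3.symm v hv
      have := three_mem_le d1 d2 d3 h h1 h2
      omega
    · refine ⟨σ (σ i), ?_, h2, hne2, Or.inr h1⟩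
      rw [nextIdx_three]
      rw [List.find?_cons_of_neg (by simp [h]), List.find?_cons_of_neg (by simp [h1]),
        List.find?_cons_of_pos (by simp [h2])]
  · refine ⟨σ i, ?_, h1, hne1, Or.inl rfl⟩
    rw [nextIdx_three]
    rw [List.find?_cons_of_neg (by simp [h]), List.find?_cons_of_pos (by simp [h1])]


/-- The deterministic total step function of circular-arborescence routing. -/
noncomputable def stepFn (G : Multigraph V E) {k : ℕ} {d : V}
    (T : Fin k → G.Arborescence d) (σ : Fin k → Fin k) (F : Finset E)
    (p : V × Fin k) : V × Fin k :=
  match G.nextIdx T σ F p.1 p.2 with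
  | some j => ((T j).parent p.1, j)
  | none => p

lemma stepFn_of_some {G : Multigraph V E} {d : V} {T : Fin k → G.Arborescence d}
    {σ : Fin k → Fin k} {F : Finset E} {p : V × Fin k} {j : Fin k}
    (h : G.nextIdx T σ F p.1 p.2 = some j) :
    stepFn G T σ F p = ((T j).parent p.1, j) := by
  unfold stepFn; rw [h]

/-- Bad state: the outgoing edge of the current arborescence has failed. -/
def BadS {G : Multigraph V E} {d : V} (T : Fin k → G.Arborescence d) (F : Finset E)
    (p : V × Fin k) : Prop := (T p.2).edge p.1 ∈ F

/-- The relation between one bad state and the next bad state of the run. -/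
def RelS {G : Multigraph V E} {d : V} (T : Fin k → G.Arborescence d)
    (σ : Fin k → Fin k) (F : Finset E) (p q : V × Fin k) : Prop :=
  q.2 ≠ p.2 ∧ (T q.2).edge p.1 ∉ F ∧ (q.2 = σ p.2 ∨ (T (σ p.2)).edge p.1 ∈ F) ∧
  ∃ m, 1 ≤ m ∧ (T q.2).parent^[m] p.1 = q.1

section Rel
variable {G : Multigraph V E} {T : Fin k → G.Arborescence d} {σ : Fin k → Fin k}
  {F : Finset E}

lemma relS_v_ne {p q : V × Fin k} (hp : p.1 ≠ d) (h : RelS T σ F p q) : q.1 ≠ p.1 := by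
  obtain ⟨-, -, -, m, hm, hiter⟩ := h
  intro he
  exact arb_no_cycle (T q.2) hp hm (by rw [hiter, he])

lemma relS_no_return {p q : V × Fin k} (hp : p.1 ≠ d) (h : RelS T σ F p q) :
    (T q.2).parent q.1 ≠ p.1 := by
  obtain ⟨-, -, -, m, hm, hiter⟩ := h
  intro he
  refine arb_no_cycle (T q.2) hp (m := m + 1) (Nat.le_succ_of_le hm) ?_
  rw [Function.iterate_succ_apply', hiter, he]

lemma relS_edge_ne {p q : V × Fin k} (hp : p.1 ≠ d) (hq : q.1 ≠ d)
    (h : RelS T σ F p q) (heq : (T p.2).edge p.1 = (T q.2).edge q.1) : False := by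
  have h1 := (T p.2).ends_eq p.1 hp
  have h2 := (T q.2).ends_eq q.1 hq
  rw [heq, h2] at h1
  rw [Sym2.eq_iff] at h1
  rcases h1 with ⟨h3, -⟩ | ⟨h3, h4⟩
  · exact relS_v_ne hp h h3
  · exact relS_no_return hp h h4

end Rel

section Seg
variable {G : Multigraph V E} {T : Fin k → G.Arborescence d} {σ : Fin k → Fin k}
  {F : Finset E}

lemma exists_bad
    (HA : ∀ (v : V) (i : Fin k), v ≠ d → (T i).edge v ∉ F →
      G.nextIdx T σ F v i = some i)
    {w : V × Fin k} {p : ℕ} (hp : 1 ≤ p) (hw : (stepFn G T σ F)^[p] w = w)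
    (hnd : ∀ m, ((stepFn G T σ F)^[m] w).1 ≠ d) :
    ∃ a, BadS T F ((stepFn G T σ F)^[a] w) := by
  by_contra hno
  push_neg at hno
  have hall : ∀ m, (stepFn G T σ F)^[m] w = ((T w.2).parent^[m] w.1, w.2) := by
    intro m
    induction m with
    | zero => simp
    | succ m ih =>
      have hv : ((T w.2).parent^[m] w.1) ≠ d := by
        have := hnd m; rwa [ih] at this
      have hg : (T w.2).edge ((T w.2).parent^[m] w.1) ∉ F := by
        have := hno m; rwa [ih] at this
      rw [Function.iterate_succ_apply', ih,
        stepFn_of_some (p := ((T w.2).parent^[m] w.1, w.2)) (HA _ _ hv hg),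
        Function.iterate_succ_apply']
  have h1 := hw
  rw [hall p] at h1
  have h2 : (T w.2).parent^[p] w.1 = w.1 := congrArg Prod.fst h1
  exact arb_no_cycle (T w.2) (by simpa using hnd 0) hp h2

lemma seg_step
    (HA : ∀ (v : V) (i : Fin k), v ≠ d → (T i).edge v ∉ F →
      G.nextIdx T σ F v i = some i)
    (HB : ∀ (v : V) (i : Fin k), v ≠ d → (T i).edge v ∈ F →
      ∃ j, G.nextIdx T σ F v i = some j ∧ (T j).edge v ∉ F ∧ j ≠ i ∧
        (j = σ i ∨ (T (σ i)).edge v ∈ F))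
    {w : V × Fin k} {p : ℕ} (hp : 1 ≤ p) (hw : (stepFn G T σ F)^[p] w = w)
    (hnd : ∀ m, ((stepFn G T σ F)^[m] w).1 ≠ d)
    {a : ℕ} (hba : BadS T F ((stepFn G T σ F)^[a] w)) :
    ∃ a', a < a' ∧ BadS T F ((stepFn G T σ F)^[a'] w) ∧
      RelS T σ F ((stepFn G T σ F)^[a] w) ((stepFn G T σ F)^[a'] w) := by
  set f := stepFn G T σ F with hf
  set x := f^[a] w with hx
  have hiter : ∀ m, f^[m] x = f^[m + a] w := by
    intro m; rw [hx, ← Function.iterate_add_apply]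
  have hxp : f^[p] x = x := by
    rw [hiter p, Nat.add_comm, Function.iterate_add_apply, hw]
  have hxnd : ∀ m, (f^[m] x).1 ≠ d := by intro m; rw [hiter m]; exact hnd (m + a)
  have hxv : x.1 ≠ d := hnd a
  obtain ⟨j, hjsome, hjgood, hjne, hjdis⟩ := HB x.1 x.2 hxv hba
  have hstep1 : f x = ((T j).parent x.1, j) := stepFn_of_some hjsome
  have hQex : ∃ m, 1 ≤ m ∧ BadS T F (f^[m] x) := ⟨p, hp, by rw [hxp]; exact hba⟩
  set m₀ := Nat.find hQex with hm₀def
  obtain ⟨hm₀1, hm₀bad⟩ := Nat.find_spec hQex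
  have hmin : ∀ m, m < m₀ → 1 ≤ m → ¬ BadS T F (f^[m] x) := by
    intro m hm h1
    have := Nat.find_min hQex hm
    tauto
  have hclaim : ∀ l, 1 ≤ l → l ≤ m₀ → f^[l] x = ((T j).parent^[l] x.1, j) := by
    intro l
    induction l with
    | zero => omega
    | succ l ih =>
      intro _ hle
      rcases Nat.eq_zero_or_pos l with rfl | hl1
      · simpa using hstep1
      · have hll : l ≤ m₀ := by omega
        have hprev := ih hl1 hll
        have hvl : ((T j).parent^[l] x.1) ≠ d := by
          have := hxnd l; rwa [hprev] at this
        have hgl : (T j).edge ((T j).parent^[l] x.1) ∉ F := by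
          have := hmin l (by omega) hl1
          rw [hprev] at this
          exact this
        rw [Function.iterate_succ_apply', hprev, hf,
          stepFn_of_some (p := ((T j).parent^[l] x.1, j)) (HA _ _ hvl hgl),
          Function.iterate_succ_apply']
  have hfin := hclaim m₀ hm₀1 le_rfl
  refine ⟨m₀ + a, by omega, ?_, ?_⟩
  · rw [← hiter m₀]; exact hm₀bad
  · rw [← hiter m₀, hfin]
    exact ⟨hjne, hjgood, hjdis, m₀, hm₀1, rfl⟩

end Seg

lemma sym2_exists (z : Sym2 V) : ∃ a b : V, z = s(a, b) := by
  induction z using Sym2.ind with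
  | _ a b => exact ⟨a, b, rfl⟩

lemma bad_card {G : Multigraph V E} (T : Fin k → G.Arborescence d) (F : Finset E)
    (hdisj : ∀ i j : Fin k, i ≠ j → (T i).ArcDisjoint (T j)) :
    (Finset.univ.filter (fun q : V × Fin k => q.1 ≠ d ∧ (T q.2).edge q.1 ∈ F)).card
      ≤ 2 * F.card := by
  set S := Finset.univ.filter (fun q : V × Fin k => q.1 ≠ d ∧ (T q.2).edge q.1 ∈ F)
  set Tgt := F.biUnion (fun e => ({e} : Finset E) ×ˢ Finset.univ.filter (· ∈ G.ends e))
  have hmap : ∀ q ∈ S, ((T q.2).edge q.1, q.1) ∈ Tgt := by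
    intro q hq
    simp only [S, Finset.mem_filter] at hq
    obtain ⟨-, hqd, hqF⟩ := hq
    simp only [Tgt, Finset.mem_biUnion]
    refine ⟨(T q.2).edge q.1, hqF, ?_⟩
    rw [Finset.mem_product]
    constructor
    · simp
    · simp only [Finset.mem_filter, Finset.mem_univ, true_and]
      rw [(T q.2).ends_eq q.1 hqd]
      exact Sym2.mem_mk_left _ _
  have hinj : Set.InjOn (fun q : V × Fin k => ((T q.2).edge q.1, q.1)) S := by
    intro q hq q' hq' heq
    simp only [S, Finset.coe_filter, Set.mem_setOf_eq] at hq hq'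
    have he : (T q.2).edge q.1 = (T q'.2).edge q'.1 := congrArg Prod.fst heq
    have hv : q.1 = q'.1 := congrArg Prod.snd heq
    have ht : q.2 = q'.2 := by
      by_contra hne
      apply hdisj q.2 q'.2 hne q.1 hq.2.1
      rw [he, hv]
    exact Prod.ext hv ht
  have h1 : S.card ≤ Tgt.card := Finset.card_le_card_of_injOn _ hmap hinj
  have h2 : Tgt.card ≤ ∑ e ∈ F, (({e} : Finset E) ×ˢ Finset.univ.filter (· ∈ G.ends e)).card :=
    Finset.card_biUnion_le
  have h3 : ∀ e ∈ F, (({e} : Finset E) ×ˢ Finset.univ.filter (· ∈ G.ends e)).card ≤ 2 := by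
    intro e _
    rw [Finset.card_product, Finset.card_singleton, one_mul]
    obtain ⟨a, b, hab⟩ := sym2_exists (G.ends e)
    have hsub : Finset.univ.filter (· ∈ G.ends e) ⊆ {a, b} := by
      intro x hx
      simp only [Finset.mem_filter, hab, Sym2.mem_iff] at hx
      simpa using hx.2
    calc (Finset.univ.filter (· ∈ G.ends e)).card ≤ ({a, b} : Finset V).card :=
          Finset.card_le_card hsub
      _ ≤ 2 := Finset.card_insert_le _ _ |>.trans (by simp)
  calc S.card ≤ Tgt.card := h1
    _ ≤ ∑ e ∈ F, _ := h2
    _ ≤ ∑ _e ∈ F, 2 := Finset.sum_le_sum h3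
    _ = 2 * F.card := by rw [Finset.sum_const, smul_eq_mul, Nat.mul_comm]

lemma five_pigeon {α : Type} {S : Finset α} (hS : S.card ≤ 4)
    {x1 x2 x3 x4 x5 : α} (h1 : x1 ∈ S) (h2 : x2 ∈ S) (h3 : x3 ∈ S) (h4 : x4 ∈ S)
    (h5 : x5 ∈ S) :
    x1 = x2 ∨ x1 = x3 ∨ x1 = x4 ∨ x1 = x5 ∨ x2 = x3 ∨ x2 = x4 ∨ x2 = x5 ∨
      x3 = x4 ∨ x3 = x5 ∨ x4 = x5 := by
  by_contra hcon
  push_neg at hcon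
  obtain ⟨n12, n13, n14, n15, n23, n24, n25, n34, n35, n45⟩ := hcon
  have hc : ({x1, x2, x3, x4, x5} : Finset α).card = 5 := by
    rw [Finset.card_insert_of_notMem (by simp [n12, n13, n14, n15]),
      Finset.card_insert_of_notMem (by simp [n23, n24, n25]),
      Finset.card_insert_of_notMem (by simp [n34, n35]),
      Finset.card_insert_of_notMem (by simpa using n45), Finset.card_singleton]
  have hsub : ({x1, x2, x3, x4, x5} : Finset α) ⊆ S := by
    intro z hz
    simp only [Finset.mem_insert, Finset.mem_singleton] at hz
    rcases hz with rfl | rfl | rfl | rfl | rfl <;> assumption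
  have := Finset.card_le_card hsub
  omega


section Loops
variable {G : Multigraph V E} {T : Fin 3 → G.Arborescence d} {σ : Fin 3 → Fin 3}
  {F : Finset E}

lemma loop2aux (hσ : IsCircularOrder σ)
    (hdisj : ∀ i j : Fin 3, i ≠ j → (T i).ArcDisjoint (T j))
    {x y : V × Fin 3} (hx : x.1 ≠ d) (hy : y.1 ≠ d)
    (hFeq : ∀ g ∈ F, g = (T x.2).edge x.1 ∨ g = (T y.2).edge y.1)
    (rxy : RelS T σ F x y)
    (hskip : (T (σ x.2)).edge x.1 ∈ F) : False := by
  have hne : σ x.2 ≠ x.2 := circ_next_ne σ hσ (by norm_num) x.2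
  have hgne : (T (σ x.2)).edge x.1 ≠ (T x.2).edge x.1 := hdisj _ _ hne x.1 hx
  have hg : (T (σ x.2)).edge x.1 = (T y.2).edge y.1 := (hFeq _ hskip).resolve_left hgne
  have h1 := (T (σ x.2)).ends_eq x.1 hx
  have h2 := (T y.2).ends_eq y.1 hy
  rw [hg, h2] at h1
  rw [Sym2.eq_iff] at h1
  rcases h1 with ⟨h3, -⟩ | ⟨-, h4⟩
  · exact relS_v_ne hx rxy h3
  · exact relS_no_return hx rxy h4

lemma loop2 (hσ : IsCircularOrder σ)
    (hdisj : ∀ i j : Fin 3, i ≠ j → (T i).ArcDisjoint (T j))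
    (hF3 : F.card ≤ 2) {x y : V × Fin 3}
    (hx : x.1 ≠ d) (hy : y.1 ≠ d) (hbx : BadS T F x) (hby : BadS T F y)
    (rxy : RelS T σ F x y) (ryx : RelS T σ F y x) : False := by
  have hexey : (T x.2).edge x.1 ≠ (T y.2).edge y.1 := fun h => relS_edge_ne hx hy rxy h
  have hsub : ({(T x.2).edge x.1, (T y.2).edge y.1} : Finset E) ⊆ F := by
    intro g hg; simp at hg; rcases hg with rfl | rfl
    · exact hbx
    · exact hby
  have hcard2 : ({(T x.2).edge x.1, (T y.2).edge y.1} : Finset E).card = 2 := by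
    rw [Finset.card_insert_of_notMem (by simpa using hexey), Finset.card_singleton]
  have hFeq : ∀ g ∈ F, g = (T x.2).edge x.1 ∨ g = (T y.2).edge y.1 := by
    have heq : ({(T x.2).edge x.1, (T y.2).edge y.1} : Finset E) = F :=
      Finset.eq_of_subset_of_card_le hsub (by omega)
    intro g hg
    rw [← heq] at hg
    simpa using hg
  rcases rxy.2.2.1 with h1 | h1
  · rcases ryx.2.2.1 with h2 | h2
    · refine circ_next2_ne σ hσ x.2 ?_
      rw [← h1, ← h2]
    · exact loop2aux hσ hdisj hy hx
        (fun g hg => ((hFeq g hg).elim Or.inr Or.inl)) ryx h2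
  · exact loop2aux hσ hdisj hx hy hFeq rxy h1

lemma loop3 (hF3 : F.card ≤ 2) {x y z : V × Fin 3}
    (hx : x.1 ≠ d) (hy : y.1 ≠ d) (hz : z.1 ≠ d)
    (hbx : BadS T F x) (hby : BadS T F y) (hbz : BadS T F z)
    (rxy : RelS T σ F x y) (ryz : RelS T σ F y z) (rzx : RelS T σ F z x) : False := by
  have nxy : (T x.2).edge x.1 ≠ (T y.2).edge y.1 := fun h => relS_edge_ne hx hy rxy h
  have nyz : (T y.2).edge y.1 ≠ (T z.2).edge z.1 := fun h => relS_edge_ne hy hz ryz h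
  have nzx : (T z.2).edge z.1 ≠ (T x.2).edge x.1 := fun h => relS_edge_ne hz hx rzx h
  have := three_mem_le nxy nzx.symm nyz hbx hby hbz
  omega

lemma loop4 (hσ : IsCircularOrder σ)
    (hdisj : ∀ i j : Fin 3, i ≠ j → (T i).ArcDisjoint (T j))
    (hF3 : F.card ≤ 2) {x y z u : V × Fin 3}
    (hx : x.1 ≠ d) (hy : y.1 ≠ d) (hz : z.1 ≠ d) (hu : u.1 ≠ d)
    (hbx : BadS T F x) (hby : BadS T F y) (hbz : BadS T F z) (hbu : BadS T F u)
    (rxy : RelS T σ F x y) (ryz : RelS T σ F y z) (rzu : RelS T σ F z u)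
    (rux : RelS T σ F u x) : False := by
  have nxy : (T x.2).edge x.1 ≠ (T y.2).edge y.1 := fun h => relS_edge_ne hx hy rxy h
  have nyz : (T y.2).edge y.1 ≠ (T z.2).edge z.1 := fun h => relS_edge_ne hy hz ryz h
  have nzu : (T z.2).edge z.1 ≠ (T u.2).edge u.1 := fun h => relS_edge_ne hz hu rzu h
  have nux : (T u.2).edge u.1 ≠ (T x.2).edge x.1 := fun h => relS_edge_ne hu hx rux h
  have hsub : ({(T x.2).edge x.1, (T y.2).edge y.1} : Finset E) ⊆ F := by
    intro g hg; simp at hg; rcases hg with rfl | rfl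
    · exact hbx
    · exact hby
  have hcard2 : ({(T x.2).edge x.1, (T y.2).edge y.1} : Finset E).card = 2 := by
    rw [Finset.card_insert_of_notMem (by simpa using nxy), Finset.card_singleton]
  have hFeq : ∀ g ∈ F, g = (T x.2).edge x.1 ∨ g = (T y.2).edge y.1 := by
    have heq : ({(T x.2).edge x.1, (T y.2).edge y.1} : Finset E) = F :=
      Finset.eq_of_subset_of_card_le hsub (by omega)
    intro g hg
    rw [← heq] at hg
    simpa using hg
  have hez : (T z.2).edge z.1 = (T x.2).edge x.1 :=
    (hFeq _ hbz).resolve_right (Ne.symm nyz)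
  have heu : (T u.2).edge u.1 = (T y.2).edge y.1 := by
    refine (hFeq _ hbu).resolve_left ?_
    rw [← hez]; exact Ne.symm nzu
  -- pair (x, z), same failed edge
  by_cases hvxz : x.1 = z.1
  · have htz : x.2 = z.2 := by
      by_contra hne
      refine hdisj x.2 z.2 hne x.1 hx ?_
      rw [← hez, hvxz]
    have hxz : x = z := Prod.ext hvxz htz
    refine loop2 hσ hdisj hF3 hx hy hbx hby rxy ?_
    rw [hxz]; exact ryz
  · -- pair (y, u), same failed edge
    by_cases hvyu : y.1 = u.1
    · have htyu : y.2 = u.2 := by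
        by_contra hne
        refine hdisj y.2 u.2 hne y.1 hy ?_
        rw [← heu, hvyu]
      have hyu : y = u := Prod.ext hvyu htyu
      refine loop2 hσ hdisj hF3 hy hz hby hbz ryz ?_
      rw [hyu]; exact rzu
    · have h1 := (T x.2).ends_eq x.1 hx
      have h2 := (T z.2).ends_eq z.1 hz
      rw [hez, h1] at h2
      rw [Sym2.eq_iff] at h2
      rcases h2 with ⟨h3, -⟩ | ⟨h3, h4⟩
      · exact hvxz h3
      · -- h3 : x.1 = parent_{z.2} z.1, h4 : parent_{x.2} x.1 = z.1
        have htxz : x.2 ≠ z.2 := by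
          intro ht
          refine no_two_cycle (T x.2) hx h4 ?_
          rw [ht]; exact h3.symm
        have h5 := (T y.2).ends_eq y.1 hy
        have h6 := (T u.2).ends_eq u.1 hu
        rw [heu, h5] at h6
        rw [Sym2.eq_iff] at h6
        rcases h6 with ⟨h7, -⟩ | ⟨h7, h8⟩
        · exact hvyu h7
        · have htyu : y.2 ≠ u.2 := by
            intro ht
            refine no_two_cycle (T y.2) hy h8 ?_
            rw [ht]; exact h7.symm
          have hfin : ∀ a b c e : Fin 3, b ≠ a → c ≠ b → e ≠ c → a ≠ e →
              a ≠ c → b ≠ e → False := by decide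
          exact hfin x.2 y.2 z.2 u.2 rxy.1 ryz.1 rzu.1 rux.1 htxz htyu

end Loops

section NoLoop
variable {G : Multigraph V E}

lemma no_loop2 {T : Fin 2 → G.Arborescence d} {σ : Fin 2 → Fin 2} {F : Finset E}
    (hσ : IsCircularOrder σ)
    (hdisj : ∀ i j : Fin 2, i ≠ j → (T i).ArcDisjoint (T j))
    (hF : F.card ≤ 1) {w : V × Fin 2} {p : ℕ} (hp : 1 ≤ p)
    (hw : (stepFn G T σ F)^[p] w = w)
    (hnd : ∀ m, ((stepFn G T σ F)^[m] w).1 ≠ d) : False := by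
  have HA : ∀ (v : V) (i : Fin 2), v ≠ d → (T i).edge v ∉ F →
      G.nextIdx T σ F v i = some i := fun v i _ h => nextIdx_good G T σ F (by norm_num) h
  have HB : ∀ (v : V) (i : Fin 2), v ≠ d → (T i).edge v ∈ F →
      ∃ j, G.nextIdx T σ F v i = some j ∧ (T j).edge v ∉ F ∧ j ≠ i ∧
        (j = σ i ∨ (T (σ i)).edge v ∈ F) := by
    intro v i hv h
    obtain ⟨hs, hg, hne⟩ := nextIdx_bad2 G T σ F hσ hdisj hF hv h
    exact ⟨σ i, hs, hg, hne, Or.inl rfl⟩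
  obtain ⟨a1, hb1⟩ := exists_bad HA hp hw hnd
  obtain ⟨a2, h12, hb2, r12⟩ := seg_step HA HB hp hw hnd hb1
  have hne := fun h => relS_edge_ne (hnd a1) (hnd a2) r12 h
  have := two_mem_le hne hb1 hb2
  omega

lemma no_loop3 {T : Fin 3 → G.Arborescence d} {σ : Fin 3 → Fin 3} {F : Finset E}
    (hσ : IsCircularOrder σ)
    (hdisj : ∀ i j : Fin 3, i ≠ j → (T i).ArcDisjoint (T j))
    (hF : F.card ≤ 2) {w : V × Fin 3} {p : ℕ} (hp : 1 ≤ p)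
    (hw : (stepFn G T σ F)^[p] w = w)
    (hnd : ∀ m, ((stepFn G T σ F)^[m] w).1 ≠ d) : False := by
  have HA : ∀ (v : V) (i : Fin 3), v ≠ d → (T i).edge v ∉ F →
      G.nextIdx T σ F v i = some i := fun v i _ h => nextIdx_good G T σ F (by norm_num) h
  have HB : ∀ (v : V) (i : Fin 3), v ≠ d → (T i).edge v ∈ F →
      ∃ j, G.nextIdx T σ F v i = some j ∧ (T j).edge v ∉ F ∧ j ≠ i ∧
        (j = σ i ∨ (T (σ i)).edge v ∈ F) :=
    fun v i hv h => nextIdx_bad3 G T σ F hσ hdisj hF hv h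
  obtain ⟨a1, hb1⟩ := exists_bad HA hp hw hnd
  obtain ⟨a2, h12, hb2, r12⟩ := seg_step HA HB hp hw hnd hb1
  obtain ⟨a3, h23, hb3, r23⟩ := seg_step HA HB hp hw hnd hb2
  obtain ⟨a4, h34, hb4, r34⟩ := seg_step HA HB hp hw hnd hb3
  obtain ⟨a5, h45, hb5, r45⟩ := seg_step HA HB hp hw hnd hb4
  set f := stepFn G T σ F with hf
  set S := Finset.univ.filter (fun q : V × Fin 3 => q.1 ≠ d ∧ (T q.2).edge q.1 ∈ F) with hS
  have hcard : S.card ≤ 4 := le_trans (bad_card T F hdisj) (by omega)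
  have hmem : ∀ a, BadS T F (f^[a] w) → f^[a] w ∈ S := by
    intro a hba
    simp only [hS, Finset.mem_filter, Finset.mem_univ, true_and]
    exact ⟨hnd a, hba⟩
  rcases five_pigeon hcard (hmem a1 hb1) (hmem a2 hb2) (hmem a3 hb3) (hmem a4 hb4)
      (hmem a5 hb5) with h | h | h | h | h | h | h | h | h | h
  · exact r12.1 (congrArg Prod.snd h).symm
  · rw [← h] at r23
    exact loop2 hσ hdisj hF (hnd a1) (hnd a2) hb1 hb2 r12 r23
  · rw [← h] at r34
    exact loop3 hF (hnd a1) (hnd a2) (hnd a3) hb1 hb2 hb3 r12 r23 r34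
  · rw [← h] at r45
    exact loop4 hσ hdisj hF (hnd a1) (hnd a2) (hnd a3) (hnd a4)
      hb1 hb2 hb3 hb4 r12 r23 r34 r45
  · exact r23.1 (congrArg Prod.snd h).symm
  · rw [← h] at r34
    exact loop2 hσ hdisj hF (hnd a2) (hnd a3) hb2 hb3 r23 r34
  · rw [← h] at r45
    exact loop3 hF (hnd a2) (hnd a3) (hnd a4) hb2 hb3 hb4 r23 r34 r45
  · exact r34.1 (congrArg Prod.snd h).symm
  · rw [← h] at r45
    exact loop2 hσ hdisj hF (hnd a3) (hnd a4) hb3 hb4 r34 r45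
  · exact r45.1 (congrArg Prod.snd h).symm

end NoLoop

lemma main_generic (G : Multigraph V E) {k : ℕ} {d : V}
    (T : Fin k → G.Arborescence d) (σ : Fin k → Fin k) (F : Finset E)
    (hdisj : ∀ i j : Fin k, i ≠ j → (T i).ArcDisjoint (T j))
    (hF2 : F.card ≤ 2)
    (HA : ∀ (v : V) (i : Fin k), v ≠ d → (T i).edge v ∉ F →
      G.nextIdx T σ F v i = some i)
    (HS : ∀ (v : V) (i : Fin k), v ≠ d → ∃ j, G.nextIdx T σ F v i = some j)
    (HC : ∀ (w : V × Fin k) (p : ℕ), 1 ≤ p → (stepFn G T σ F)^[p] w = w →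
      (∀ m, ((stepFn G T σ F)^[m] w).1 ≠ d) → False)
    (s : V) (i0 : Fin k) :
    ∃ n q, G.caRun T σ F s i0 n = some q ∧ q.1 = d ∧
      switchCount (G.caRun T σ F s i0) n ≤ 4 := by
  classical
  set f := stepFn G T σ F with hf
  set X : ℕ → V × Fin k := fun n => f^[n] (s, i0) with hX
  set run := G.caRun T σ F s i0 with hrun
  have hrun0 : run 0 = some (X 0) := rfl
  have hstep : ∀ n, (X n).1 ≠ d → run n = some (X n) → run (n + 1) = some (X (n + 1)) := by
    intro n hd hr
    obtain ⟨j, hj⟩ := HS (X n).1 (X n).2 hd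
    have hcs : G.caStep T σ F (X n) = some (f (X n)) := by
      unfold Multigraph.caStep
      rw [if_neg hd, hj, Option.map_some]
      rw [hf, stepFn_of_some hj]
    have h1 : run (n + 1) = (run n).bind (G.caStep T σ F) := rfl
    have h2 : X (n + 1) = f (X n) := Function.iterate_succ_apply' f n (s, i0)
    rw [h1, hr, Option.bind_some, hcs, h2]
  by_cases hP : ∃ n, ∃ q, run n = some q ∧ q.1 = d
  · set n₀ := Nat.find hP with hn₀
    obtain ⟨q0, hq0, hq0d⟩ := Nat.find_spec hP
    have hmin : ∀ m, m < n₀ → ∀ q, run m = some q → q.1 ≠ d := by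
      intro m hm q hq hd
      exact Nat.find_min hP hm ⟨q, hq, hd⟩
    have hallm : ∀ m, m ≤ n₀ → run m = some (X m) := by
      intro m
      induction m with
      | zero => intro _; exact hrun0
      | succ m ih =>
        intro hm
        have hm' : m < n₀ := by omega
        have hr := ih hm'.le
        exact hstep m (hmin m hm' (X m) hr) hr
    have hndm : ∀ m, m < n₀ → (X m).1 ≠ d := fun m hm => hmin m hm (X m) (hallm m hm.le)
    have hq0X : q0 = X n₀ := by
      have h := hallm n₀ le_rfl; rw [hq0] at h; exact Option.some_inj.mp h
    refine ⟨n₀, X n₀, hallm n₀ le_rfl, by rw [← hq0X]; exact hq0d, ?_⟩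
    unfold switchCount
    set L := (List.range n₀).filter (fun m => switchAt run m) with hL
    have hLn : L.Nodup := (List.nodup_range (n := n₀)).filter _
    have hLlt : ∀ m ∈ L, m < n₀ := by
      intro m hm
      exact List.mem_range.mp (List.mem_filter.mp hm).1
    have hLbad : ∀ m ∈ L, (X m).1 ≠ d ∧ (T (X m).2).edge (X m).1 ∈ F := by
      intro m hm
      obtain ⟨hmr, hsw⟩ := List.mem_filter.mp hm
      have hmlt := List.mem_range.mp hmr
      have hnd' := hndm m hmlt
      refine ⟨hnd', ?_⟩
      by_contra hgood
      have hjs := HA (X m).1 (X m).2 hnd' hgood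
      have hx1 : X (m + 1) = f (X m) := Function.iterate_succ_apply' f m (s, i0)
      have hx2 : f (X m) = ((T (X m).2).parent (X m).1, (X m).2) := by
        rw [hf]; exact stepFn_of_some hjs
      unfold switchAt at hsw
      rw [hallm m (by omega), hallm (m + 1) (by omega), hx1, hx2] at hsw
      simp at hsw
    have key : ∀ a b : ℕ, a < b → b < n₀ → X a = X b → False := by
      intro a b hlt hbn he
      have hcyc : ∀ m, ∃ c, a ≤ c ∧ c < b ∧ f^[m] (X a) = X c := by
        intro m
        induction m with
        | zero => exact ⟨a, le_rfl, hlt, rfl⟩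
        | succ m ih =>
          obtain ⟨c, hc1, hc2, hc3⟩ := ih
          have hstep' : f^[m + 1] (X a) = X (c + 1) := by
            rw [Function.iterate_succ_apply', hc3]
            exact (Function.iterate_succ_apply' f c (s, i0)).symm
          rcases Nat.lt_or_ge (c + 1) b with hcb | hcb
          · exact ⟨c + 1, by omega, hcb, hstep'⟩
          · have hcb' : c + 1 = b := by omega
            refine ⟨a, le_rfl, hlt, ?_⟩
            rw [hstep', hcb', ← he]
      refine HC (X a) (b - a) (by omega) ?_ ?_
      · show f^[b - a] (X a) = X a
        rw [hX]
        show f^[b - a] (f^[a] (s, i0)) = f^[a] (s, i0)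
        rw [← Function.iterate_add_apply, Nat.sub_add_cancel hlt.le]
        exact he.symm
      · intro m
        obtain ⟨c, _, hc2, hc3⟩ := hcyc m
        show (f^[m] (X a)).1 ≠ d
        rw [hc3]
        exact hndm c (by omega)
    have hinj : ∀ a ∈ L, ∀ b ∈ L, X a = X b → a = b := by
      intro a ha b hb he
      rcases Nat.lt_trichotomy a b with h | h | h
      · exact (key a b h (hLlt b hb) he).elim
      · exact h
      · exact (key b a h (hLlt a ha) he.symm).elim
    have hcard4 : (Finset.univ.filter
        (fun q : V × Fin k => q.1 ≠ d ∧ (T q.2).edge q.1 ∈ F)).card ≤ 4 :=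
      le_trans (bad_card T F hdisj) (by omega)
    have hlen : L.length = L.toFinset.card := (List.toFinset_card_of_nodup hLn).symm
    rw [hlen]
    refine le_trans ?_ hcard4
    refine Finset.card_le_card_of_injOn X ?_ ?_
    · intro m hm
      rw [Finset.mem_coe, List.mem_toFinset] at hm
      simp only [Finset.coe_filter, Set.mem_setOf_eq, Finset.mem_filter, Finset.mem_univ, true_and]
      exact hLbad m hm
    · intro a ha b hb he
      rw [Finset.mem_coe, List.mem_toFinset] at ha hb
      exact hinj a ha b hb he
  · exfalso
    push_neg at hP
    have hall : ∀ n, run n = some (X n) := by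
      intro n; induction n with
      | zero => exact hrun0
      | succ n ih => exact hstep n (hP n (X n) ih) ih
    have hnd : ∀ n, (X n).1 ≠ d := fun n => hP n (X n) (hall n)
    have key : ∀ a b : ℕ, a < b → X a = X b → False := by
      intro a b hlt he
      refine HC (X a) (b - a) (by omega) ?_ ?_
      · show f^[b - a] (X a) = X a
        rw [hX]
        show f^[b - a] (f^[a] (s, i0)) = f^[a] (s, i0)
        rw [← Function.iterate_add_apply, Nat.sub_add_cancel hlt.le]
        exact he.symm
      · intro m
        show (f^[m] (X a)).1 ≠ d
        rw [hX]
        show (f^[m] (f^[a] (s, i0))).1 ≠ d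
        rw [← Function.iterate_add_apply]
        exact hnd (m + a)
    obtain ⟨a, b, hab, heq⟩ := Finite.exists_ne_map_eq_of_infinite X
    rcases hab.lt_or_gt with h | h
    · exact key a b h heq
    · exact key b a h heq.symm


end CircAux

/-- For any `k`-edge-connected multigraph with `k ∈ {2,3}` and any destination
`d`, any circular-arborescence routing is `(k-1)`-resilient, and during the
delivery of any packet the number of switches between arborescences is at
most `4`. -/
theorem statement_0 {V E : Type} [Fintype V] [Fintype E]
    (G : Multigraph V E) (k : ℕ) (hk : k = 2 ∨ k = 3)
    (hconn : G.EdgeConnected k) (d : V)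
    (T : Fin k → G.Arborescence d)
    (hdisj : ∀ i j : Fin k, i ≠ j → (T i).ArcDisjoint (T j))
    (σ : Fin k → Fin k) (hσ : IsCircularOrder σ)
    (init : V → Fin k)
    (F : Finset E) (hF : F.card ≤ k - 1)
    (s : V) (hs : G.ConnAvoiding F s d) :
    ∃ (n : ℕ) (p : V × Fin k),
      G.caRun T σ F s (init s) n = some p ∧ p.1 = d ∧
      switchCount (G.caRun T σ F s (init s)) n ≤ 4 := by
  rcases hk with rfl | rfl
  · -- k = 2
    have hF1 : F.card ≤ 1 := hF
    have HA : ∀ (v : V) (i : Fin 2), v ≠ d → (T i).edge v ∉ F →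
        G.nextIdx T σ F v i = some i :=
      fun v i _ h => nextIdx_good G T σ F (by norm_num) h
    have HS : ∀ (v : V) (i : Fin 2), v ≠ d → ∃ j, G.nextIdx T σ F v i = some j := by
      intro v i hv
      by_cases h : (T i).edge v ∈ F
      · exact ⟨σ i, (nextIdx_bad2 G T σ F hσ hdisj hF1 hv h).1⟩
      · exact ⟨i, nextIdx_good G T σ F (by norm_num) h⟩
    exact main_generic G T σ F hdisj (by omega) HA HS
      (fun w p hp hw hnd => no_loop2 hσ hdisj hF1 hp hw hnd) s (init s)
  · -- k = 3
    have hF2 : F.card ≤ 2 := hF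
    have HA : ∀ (v : V) (i : Fin 3), v ≠ d → (T i).edge v ∉ F →
        G.nextIdx T σ F v i = some i :=
      fun v i _ h => nextIdx_good G T σ F (by norm_num) h
    have HS : ∀ (v : V) (i : Fin 3), v ≠ d → ∃ j, G.nextIdx T σ F v i = some j := by
      intro v i hv
      by_cases h : (T i).edge v ∈ F
      · obtain ⟨j, hj, -⟩ := nextIdx_bad3 G T σ F hσ hdisj hF2 hv h
        exact ⟨j, hj⟩
      · exact ⟨i, nextIdx_good G T σ F (by norm_num) h⟩
    exact main_generic G T σ F hdisj hF2 HA HS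
      (fun w p hp hw hnd => no_loop3 hσ hdisj hF2 hp hw hnd) s (init s)


end Srr
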